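/- Let F : Ω → U be a continuous frame for a Hilbert C*-module U with frame operator S. Then the mapping ω ↦ S^{-1}F(ω) is a dual for F; i.e., f = ∫_Ω ⟨f, S^{-1}F(ω)⟩ F(ω) dμ(ω) for all f ∈ U. -/
import Mathlib


open MeasureTheory

class HCSM (A : outParam Type*) (U : Type*) [CStarAlgebra A] [PartialOrder A] [StarOrderedRing A]
    [NormedAddCommGroup U] [NormedSpace ℂ U] extends SMul A U where
  inner : U → U → A
  add_left : ∀ f g h : U, inner (f + g) h = inner f h + inner g h
  smul_left : ∀ (a : A) (f g : U), inner (a • f) g = a * inner f g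
  smulC_left : ∀ (c : ℂ) (f g : U), inner (c • f) g = c • inner f g
  star_inner : ∀ f g : U, star (inner f g) = inner g f
  inner_nonneg : ∀ f : U, 0 ≤ inner f f
  inner_definite : ∀ f : U, inner f f = 0 → f = 0
  norm_inner : ∀ f : U, ‖f‖ = Real.sqrt ‖inner f f‖

notation "⟪" f ", " g "⟫" => HCSM.inner f g

variable {A : Type*} [CStarAlgebra A] [PartialOrder A] [StarOrderedRing A]
variable {U : Type*} [NormedAddCommGroup U] [NormedSpace ℂ U] [CompleteSpace U] [HCSM A U]
variable {Ω : Type*} [MeasurableSpace Ω]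

def MemL2 (μ : Measure Ω) (φ : Ω → A) : Prop :=
  AEStronglyMeasurable φ μ ∧ Integrable (fun ω => φ ω * star (φ ω)) μ

def WeaklyMeasurable (μ : Measure Ω) (F : Ω → U) : Prop :=
  ∀ f : U, AEStronglyMeasurable (fun ω => (⟪f, F ω⟫ : A)) μ

def IsBessel (μ : Measure Ω) (F : Ω → U) (b : ℝ) : Prop :=
  WeaklyMeasurable μ F ∧ 0 < b ∧ ∀ f : U,
    Integrable (fun ω => (⟪f, F ω⟫ : A) * ⟪F ω, f⟫) μ ∧
    (∫ ω, (⟪f, F ω⟫ : A) * ⟪F ω, f⟫ ∂μ) ≤ b • (⟪f, f⟫ : A)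

def IsContFrame (μ : Measure Ω) (F : Ω → U) (a b : ℝ) : Prop :=
  WeaklyMeasurable μ F ∧ 0 < a ∧ 0 < b ∧ ∀ f : U,
    Integrable (fun ω => (⟪f, F ω⟫ : A) * ⟪F ω, f⟫) μ ∧
    a • (⟪f, f⟫ : A) ≤ (∫ ω, (⟪f, F ω⟫ : A) * ⟪F ω, f⟫ ∂μ) ∧
    (∫ ω, (⟪f, F ω⟫ : A) * ⟪F ω, f⟫ ∂μ) ≤ b • (⟪f, f⟫ : A)

def MuComplete (μ : Measure Ω) (F : Ω → U) : Prop :=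
  ∀ f : U, (∀ᵐ ω ∂μ, (⟪f, F ω⟫ : A) = 0) → f = 0

def IsRieszBasis (μ : Measure Ω) (F : Ω → U) (a b : ℝ) : Prop :=
  WeaklyMeasurable μ F ∧ MuComplete μ F ∧ 0 < a ∧ 0 < b ∧
  ∀ φ : Ω → A, MemL2 μ φ → ∀ Ω₁ : Set Ω, MeasurableSet Ω₁ → μ Ω₁ < ⊤ →
    a * Real.sqrt ‖∫ ω in Ω₁, φ ω * star (φ ω) ∂μ‖ ≤ ‖∫ ω in Ω₁, φ ω • F ω ∂μ‖ ∧
    ‖∫ ω in Ω₁, φ ω • F ω ∂μ‖ ≤ b * Real.sqrt ‖∫ ω in Ω₁, φ ω * star (φ ω) ∂μ‖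

def L2Independent (μ : Measure Ω) (F : Ω → U) : Prop :=
  ∀ φ : Ω → A, MemL2 μ φ → (∫ ω, φ ω • F ω ∂μ) = 0 → ∀ ω, φ ω = 0

def IsDual (μ : Measure Ω) (F G : Ω → U) : Prop :=
  ∀ f : U, Integrable (fun ω => (⟪f, G ω⟫ : A) • F ω) μ ∧
    (∫ ω, (⟪f, G ω⟫ : A) • F ω ∂μ) = f

def IsRieszType (μ : Measure Ω) (F : Ω → U) : Prop :=
  (∃ G : Ω → U, (∃ b, IsBessel μ G b) ∧ IsDual μ F G) ∧
  ∀ G₁ G₂ : Ω → U, (∃ b, IsBessel μ G₁ b) → IsDual μ F G₁ →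
    (∃ b, IsBessel μ G₂ b) → IsDual μ F G₂ → G₁ =ᵐ[μ] G₂

section MyAux

variable {A : Type*} [CStarAlgebra A] [PartialOrder A] [StarOrderedRing A]
variable {U : Type*} [NormedAddCommGroup U] [NormedSpace ℂ U] [CompleteSpace U] [HCSM A U]
variable {Ω : Type*} [MeasurableSpace Ω]

lemma my_inner_add_right (f g h : U) : (⟪f, g + h⟫ : A) = ⟪f, g⟫ + ⟪f, h⟫ := by
  rw [← HCSM.star_inner, HCSM.add_left, star_add, HCSM.star_inner, HCSM.star_inner]

lemma my_inner_neg_left (f g : U) : (⟪-f, g⟫ : A) = -⟪f, g⟫ := by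
  have := HCSM.smulC_left (-1 : ℂ) f g
  simpa using this

lemma my_inner_sub_left (f g h : U) : (⟪f - g, h⟫ : A) = ⟪f, h⟫ - ⟪g, h⟫ := by
  rw [sub_eq_add_neg, HCSM.add_left, my_inner_neg_left, sub_eq_add_neg]

lemma my_inner_zero_left (g : U) : (⟪(0 : U), g⟫ : A) = 0 := by
  have := HCSM.smulC_left (0 : ℂ) 0 g
  simpa using this

lemma my_inner_zero_right (g : U) : (⟪g, (0 : U)⟫ : A) = 0 := by
  rw [← HCSM.star_inner, my_inner_zero_left, star_zero]

lemma my_inner_smul_right (a : A) (f g : U) : (⟪f, a • g⟫ : A) = ⟪f, g⟫ * star a := by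
  rw [← HCSM.star_inner, HCSM.smul_left, star_mul, HCSM.star_inner]

lemma my_norm_inner_self (g : U) : ‖(⟪g, g⟫ : A)‖ = ‖g‖ ^ 2 := by
  rw [HCSM.norm_inner g, Real.sq_sqrt (norm_nonneg _)]

lemma my_inner_sub_right (f g h : U) : (⟪f, g - h⟫ : A) = ⟪f, g⟫ - ⟪f, h⟫ := by
  rw [← HCSM.star_inner, my_inner_sub_left, star_sub, HCSM.star_inner, HCSM.star_inner]

lemma my_cauchy_schwarz (f g : U) : ‖(⟪f, g⟫ : A)‖ ≤ ‖f‖ * ‖g‖ := by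
  by_cases hg : g = 0
  · simp [hg, my_inner_zero_right, mul_nonneg (norm_nonneg f) (norm_nonneg g)]
  have hng : (0 : ℝ) < ‖g‖ := norm_pos_iff.2 hg
  have hn : (0 : ℝ) < ‖g‖ ^ 2 := by positivity
  set x : A := ⟪f, g⟫ with hx
  set n : ℝ := ‖g‖ ^ 2 with hnn
  set a : A := n⁻¹ • x with ha
  set h : U := a • g with hh
  set c : A := n⁻¹ • (x * star x) with hc
  have hexp : (⟪f - h, f - h⟫ : A)
      = ⟪f, f⟫ - ⟪f, h⟫ - (⟪h, f⟫ - ⟪h, h⟫) := by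
    rw [my_inner_sub_left, my_inner_sub_right, my_inner_sub_right]
  have hfh : (⟪f, h⟫ : A) = c := by
    rw [hh, my_inner_smul_right, ha, star_smul, star_trivial, mul_smul_comm, hx, hc]
  have hhf : (⟪h, f⟫ : A) = c := by
    rw [hh, HCSM.smul_left, ha, smul_mul_assoc, ← HCSM.star_inner f g, hx, hc]
  have hgg : (⟪g, g⟫ : A) ≤ algebraMap ℝ A n := by
    have h1 : (⟪g, g⟫ : A) ≤ algebraMap ℝ A ‖(⟪g, g⟫ : A)‖ :=
      IsSelfAdjoint.le_algebraMap_norm_self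
        (IsSelfAdjoint.of_nonneg (HCSM.inner_nonneg g))
    rwa [my_norm_inner_self] at h1
  have hhh : (⟪h, h⟫ : A) ≤ c := by
    have h2 : (⟪h, h⟫ : A) = a * ⟪g, g⟫ * star a := by
      rw [hh, HCSM.smul_left, my_inner_smul_right, mul_assoc]
    have h3 : a * ⟪g, g⟫ * star a ≤ a * algebraMap ℝ A n * star a := by
      have := star_left_conjugate_le_conjugate hgg (star a)
      simpa [star_star, mul_assoc] using this
    have h4 : a * algebraMap ℝ A n * star a = c := by
      rw [ha, hc, star_smul, star_trivial, Algebra.algebraMap_eq_smul_one]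
      simp only [smul_mul_assoc, mul_smul_comm, mul_one, smul_smul]
      congr 1
      field_simp
    rw [h2, ← h4]
    exact h3
  have key : x * star x ≤ n • (⟪f, f⟫ : A) := by
    have h0 : (0 : A) ≤ ⟪f - h, f - h⟫ := HCSM.inner_nonneg _
    rw [hexp, hfh, hhf] at h0
    -- h0 : 0 ≤ ⟪f,f⟫ - c - (c - ⟪h,h⟫)
    have h6 : c + (c - ⟪h, h⟫) ≤ (⟪f, f⟫ : A) := by
      rw [sub_sub] at h0
      exact sub_nonneg.mp h0 |>.trans_eq rfl
    have h7 : c ≤ (⟪f, f⟫ : A) :=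
      (le_add_of_nonneg_right (sub_nonneg.mpr hhh)).trans h6
    have h8 := smul_le_smul_of_nonneg_left h7 (le_of_lt hn)
    rw [hc, smul_smul, mul_inv_cancel₀ (ne_of_gt hn), one_smul] at h8
    exact h8
  have hx2 : ‖x‖ ^ 2 ≤ n * ‖f‖ ^ 2 := by
    have hxx : ‖x * star x‖ = ‖x‖ ^ 2 := by
      rw [CStarRing.norm_self_mul_star, ← pow_two]
    have hmono : ‖x * star x‖ ≤ ‖n • (⟪f, f⟫ : A)‖ :=
      CStarAlgebra.norm_le_norm_of_nonneg_of_le (mul_star_self_nonneg x) key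
    rw [hxx] at hmono
    calc ‖x‖ ^ 2 ≤ ‖n • (⟪f, f⟫ : A)‖ := hmono
      _ = |n| * ‖(⟪f, f⟫ : A)‖ := by rw [norm_smul, Real.norm_eq_abs]
      _ = n * ‖f‖ ^ 2 := by rw [abs_of_pos hn, my_norm_inner_self]
  have h9 : ‖x‖ ^ 2 ≤ (‖f‖ * ‖g‖) ^ 2 := by
    rw [hnn] at hx2; nlinarith [hx2]
  nlinarith [h9, norm_nonneg x, mul_nonneg (norm_nonneg f) (norm_nonneg g)]

/-- inner as a continuous linear map in the first variable. -/
noncomputable def innerCLM (g : U) : U →L[ℂ] A :=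
  LinearMap.mkContinuous
    { toFun := fun f => (⟪f, g⟫ : A)
      map_add' := fun x y => HCSM.add_left x y g
      map_smul' := fun c x => HCSM.smulC_left c x g }
    ‖g‖ (fun f => by simpa [mul_comm] using my_cauchy_schwarz f g)

@[simp] lemma innerCLM_apply (g f : U) : innerCLM (A := A) g f = ⟪f, g⟫ := rfl

/-- star as an ℝ-linear isometry. -/
noncomputable def starLI : A →ₗᵢ[ℝ] A where
  toLinearMap :=
    { toFun := star
      map_add' := star_add
      map_smul' := fun r x => by simp [star_smul] }
  norm_map' := norm_star

lemma my_integral_star {μ : Measure Ω} (φ : Ω → A) :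
    ∫ ω, star (φ ω) ∂μ = star (∫ ω, φ ω ∂μ) :=
  (starLI (A := A)).integral_comp_comm φ

end MyAux

theorem canonical_dual_is_dual
    {A : Type*} [CStarAlgebra A] [PartialOrder A] [StarOrderedRing A]
    {U : Type*} [NormedAddCommGroup U] [NormedSpace ℂ U] [CompleteSpace U] [HCSM A U]
    {Ω : Type*} [MeasurableSpace Ω] (μ : Measure Ω)
    (F : Ω → U) (a b : ℝ) (hF : IsContFrame μ F a b)
    (S Sinv : U → U)
    (hS : ∀ f g : U, (⟪S f, g⟫ : A) = ∫ ω, (⟪f, F ω⟫ : A) * ⟪F ω, g⟫ ∂μ)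
    (hSinv : ∀ f : U, Sinv (S f) = f ∧ S (Sinv f) = f)
    (hint : ∀ f : U, Integrable (fun ω => (⟪f, Sinv (F ω)⟫ : A) • F ω) μ) :
    ∀ f : U, (∫ ω, (⟪f, Sinv (F ω)⟫ : A) • F ω ∂μ) = f := by
  -- S is self-adjoint
  have hSadj : ∀ x y : U, (⟪S x, y⟫ : A) = ⟪x, S y⟫ := by
    intro x y
    rw [← HCSM.star_inner (S y) x, hS y x, hS x y, ← my_integral_star]
    congr 1
    funext ω
    rw [star_mul, HCSM.star_inner, HCSM.star_inner]
  -- Sinv is self-adjoint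
  have hSinvadj : ∀ x y : U, (⟪x, Sinv y⟫ : A) = ⟪Sinv x, y⟫ := by
    intro x y
    conv_lhs => rw [← (hSinv x).2]
    rw [hSadj, (hSinv y).2]
  intro f
  set I : U := ∫ ω, (⟪f, Sinv (F ω)⟫ : A) • F ω ∂μ with hI
  have hdiff : ∀ g : U, (⟪I - f, g⟫ : A) = 0 := by
    intro g
    have h1 : (⟪I, g⟫ : A) = ∫ ω, (⟪f, Sinv (F ω)⟫ : A) * ⟪F ω, g⟫ ∂μ := by
      have hcomm := (innerCLM (A := A) g).integral_comp_comm (hint f)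
      have h0 : (⟪I, g⟫ : A) = innerCLM (A := A) g I := rfl
      rw [h0, hI, ← hcomm]
      congr 1
      funext ω
      rw [innerCLM_apply, HCSM.smul_left]
    have h2 : (⟪I, g⟫ : A) = ⟪f, g⟫ := by
      rw [h1]
      have : (fun ω => (⟪f, Sinv (F ω)⟫ : A) * ⟪F ω, g⟫)
          = fun ω => (⟪Sinv f, F ω⟫ : A) * ⟪F ω, g⟫ := by
        funext ω
        rw [hSinvadj]
      rw [this, ← hS, (hSinv f).2]
    rw [my_inner_sub_left, h2, sub_self]
  have := hdiff (I - f)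
  have hz : I - f = 0 := HCSM.inner_definite _ this
  exact sub_eq_zero.mp hz
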